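/- Let G be a finite group, H ≤ G, g ∈ G \ H with g² ∈ H, S = S(g) = H ∩ gHg⁻¹, and let Ŝ = S ∪ gS (a subgroup of G containing S with index 2). Then for every irreducible complex character χ of S: ν₂(g,χ) = (1/|S|) Σ_{x∈S} χ((gx)²) = (1/|S|) Σ_{x∈S} χ(x·(gxg⁻¹)·g²) = (1/|S|) Σ_{x∈Ŝ} χ(x²) − ν₂(χ); here x² ∈ S for every x ∈ Ŝ, so χ may be evaluated at x². -/

import Mathlib

open scoped BigOperators Pointwise Classical
open CategoryTheory

/-- For `H ≤ G` and `g ∈ G`, the stabilizer `S(g) = Stab_H(gH) = H ∩ gHg⁻¹`. -/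
def stabCoset {G : Type*} [Group G] (H : Subgroup G) (g : G) : Subgroup G :=
  H ⊓ Subgroup.map (MulAut.conj g).toMonoidHom H

/-- The `m`-th Frobenius–Schur indicator `ν_m(g,χ)` of the simple object of the
group-theoretical fusion category `C(G,H)` attached to `(g,χ)`:
`ν_m(g,χ) = (1/|S(g)|) Σ_{x ∈ H, (gx)^m ∈ H} conj(χ((gx)^m))`
(recall that for `x ∈ H`, `(gx)^m ∈ H` iff `(gx)^m ∈ S(g)`). -/
noncomputable def nuInd {G : Type*} [Group G] (H : Subgroup G) (g : G) (m : ℕ)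
    (χ : ↥(stabCoset H g) → ℂ) : ℂ :=
  (Nat.card ↥(stabCoset H g) : ℂ)⁻¹ *
    ∑ᶠ x : G, if h : x ∈ H ∧ (g * x) ^ m ∈ stabCoset H g
      then (starRingEnd ℂ) (χ ⟨(g * x) ^ m, h.2⟩) else 0

/-- The classical second Frobenius–Schur indicator `ν₂(θ) = (1/|K|) Σ_{x∈K} θ(x²)`. -/
noncomputable def fsInd {K : Type*} [Group K] (θ : K → ℂ) : ℂ :=
  (Nat.card K : ℂ)⁻¹ * ∑ᶠ x : K, θ (x ^ 2)

section auxMatrix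
open Polynomial Matrix

private lemma eval_charpoly' {ι : Type*} [Fintype ι] [DecidableEq ι] (A : Matrix ι ι ℂ) (r : ℂ) :
    A.charpoly.eval r = (Matrix.scalar ι r - A).det := by
  rw [Matrix.charpoly, _root_.eval_det, Matrix.matPolyEquiv_charmatrix]
  simp

private lemma root_pow_eq_one {ι : Type*} [Fintype ι] [DecidableEq ι] {A : Matrix ι ι ℂ} {m : ℕ}
    (hm : m ≠ 0) (hA : A ^ m = 1) {μ : ℂ} (hμ : μ ∈ A.charpoly.roots) : μ ^ m = 1 := by
  have hroot : A.charpoly.IsRoot μ := isRoot_of_mem_roots hμ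
  have h0 : (Matrix.scalar ι μ - A).det = 0 := by rw [← eval_charpoly']; exact hroot
  obtain ⟨v, hv0, hv⟩ := (Matrix.exists_mulVec_eq_zero_iff).2 h0
  have hAv : A.mulVec v = μ • v := by
    have h2 := hv
    rw [Matrix.sub_mulVec] at h2
    have h1 : (Matrix.scalar ι μ).mulVec v = μ • v := by
      ext i; rw [Matrix.scalar_apply, Matrix.mulVec_diagonal]; simp
    rw [h1] at h2
    linear_combination (norm := module) -h2
  have hpow : ∀ k : ℕ, (A ^ k).mulVec v = μ ^ k • v := by
    intro k
    induction k with
    | zero => simp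
    | succ k ih =>
      rw [pow_succ', ← Matrix.mulVec_mulVec, ih, Matrix.mulVec_smul, hAv, smul_smul, pow_succ,
        mul_comm]
  have hfin : v = μ ^ m • v := by
    have := hpow m
    rwa [hA, Matrix.one_mulVec] at this
  obtain ⟨i, hi⟩ := Function.ne_iff.mp hv0
  have hz : (μ ^ m - 1) * v i = 0 := by
    have h3 := congrFun hfin i
    simp only [Pi.smul_apply, smul_eq_mul] at h3
    ring_nf
    linear_combination -h3
  rcases mul_eq_zero.mp hz with h | h
  · linear_combination h
  · exact absurd h hi

private lemma charpoly_inv_eq {ι : Type*} [Fintype ι] [DecidableEq ι] {A : Matrix ι ι ℂ}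
    (hdet : A.det ≠ 0) (hroots0 : ∀ μ ∈ A.charpoly.roots, μ ≠ 0) :
    A⁻¹.charpoly = (A.charpoly.roots.map fun a => X - C a⁻¹).prod := by
  set R := A.charpoly.roots with hR
  have hcard : R.card = Fintype.card ι := by
    rw [hR, ← A.charpoly_natDegree_eq_dim]
    exact (Polynomial.splits_iff_card_roots).mp (IsAlgClosed.splits A.charpoly)
  have hAdet : A.det = R.prod := Matrix.det_eq_prod_roots_charpoly A
  have hprod : A.charpoly = (R.map fun a => X - C a).prod :=
    (IsAlgClosed.splits A.charpoly).eq_prod_roots_of_monic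
      A.charpoly_monic
  apply Polynomial.eq_of_infinite_eval_eq
  apply Set.Infinite.mono (s := {0}ᶜ)
  swap
  · exact (Set.finite_singleton (0:ℂ)).infinite_compl
  intro z hz
  simp only [Set.mem_setOf_eq]
  have hz0 : z ≠ 0 := hz
  have e1 : A⁻¹.charpoly.eval z = (Matrix.scalar ι z - A⁻¹).det := by
    rw [Matrix.charpoly, _root_.eval_det, Matrix.matPolyEquiv_charmatrix]; simp
  have e2 : Matrix.scalar ι z - A⁻¹ = A⁻¹ * (z • A - 1) := by
    rw [mul_sub, Matrix.mul_smul, Matrix.nonsing_inv_mul A (Ne.isUnit hdet), mul_one,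
      Matrix.scalar_apply, Matrix.smul_one_eq_diagonal]
  have e3 : z • A - 1 = z • (A - z⁻¹ • (1 : Matrix ι ι ℂ)) := by
    rw [smul_sub, smul_smul, mul_inv_cancel₀ hz0, one_smul]
  have e4 : A - z⁻¹ • (1 : Matrix ι ι ℂ) = -(Matrix.scalar ι z⁻¹ - A) := by
    rw [neg_sub, Matrix.scalar_apply, Matrix.smul_one_eq_diagonal]
  have e5 : (Matrix.scalar ι z⁻¹ - A).det = A.charpoly.eval z⁻¹ := by
    rw [Matrix.charpoly, _root_.eval_det, Matrix.matPolyEquiv_charmatrix]; simp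
  have e6 : A.charpoly.eval z⁻¹ = (R.map fun a => z⁻¹ - a).prod := by
    rw [hprod, ← Polynomial.coe_evalRingHom, map_multiset_prod, Multiset.map_map]
    simp
  have lhs : A⁻¹.charpoly.eval z
      = A.det⁻¹ * (z ^ Fintype.card ι *
        ((-1) ^ Fintype.card ι * (R.map fun a => z⁻¹ - a).prod)) := by
    rw [e1, e2, Matrix.det_mul, e3, Matrix.det_smul, e4, Matrix.det_neg, e5, e6,
      Matrix.det_nonsing_inv, Ring.inverse_eq_inv']
  have rhs : ((R.map fun a => X - C a⁻¹).prod).eval z = (R.map fun a => z - a⁻¹).prod := by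
    rw [← Polynomial.coe_evalRingHom, map_multiset_prod, Multiset.map_map]
    simp
  rw [lhs, rhs]
  have key : z ^ Fintype.card ι * ((-1) ^ Fintype.card ι * (R.map fun a => z⁻¹ - a).prod)
      = R.prod * (R.map fun a => z - a⁻¹).prod := by
    have h1 : z ^ Fintype.card ι * (-1 : ℂ) ^ Fintype.card ι = (-z) ^ R.card := by
      rw [hcard]; rw [neg_pow]; ring
    rw [← mul_assoc, h1]
    have h2 : (-z : ℂ) ^ R.card = (R.map fun _ => -z).prod := by
      rw [Multiset.map_const', Multiset.prod_replicate]
    rw [h2, ← Multiset.prod_map_mul]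
    have h3 : R.prod = (R.map fun a => a).prod := by simp
    rw [h3, ← Multiset.prod_map_mul]
    apply congrArg
    apply Multiset.map_congr rfl
    intro a ha
    have ha0 : a ≠ 0 := hroots0 a ha
    field_simp
    ring
  rw [key, ← hAdet]
  field_simp

private lemma trace_inv_eq_conj {ι : Type*} [Fintype ι] [DecidableEq ι] {A : Matrix ι ι ℂ}
    {m : ℕ} (hm : m ≠ 0) (hA : A ^ m = 1) : A⁻¹.trace = (starRingEnd ℂ) A.trace := by
  have hdet : A.det ≠ 0 := by
    have h1 : A * A ^ (m - 1) = 1 := by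
      rw [← pow_succ', Nat.sub_add_cancel (Nat.one_le_iff_ne_zero.mpr hm)]; exact hA
    intro h0
    have := congrArg Matrix.det h1
    rw [Matrix.det_mul, h0, zero_mul, Matrix.det_one] at this
    exact zero_ne_one this
  have hroots1 : ∀ μ ∈ A.charpoly.roots, μ ^ m = 1 := fun μ hμ => root_pow_eq_one hm hA hμ
  have hroots0 : ∀ μ ∈ A.charpoly.roots, μ ≠ 0 := by
    intro μ hμ h0
    have := hroots1 μ hμ
    rw [h0, zero_pow hm] at this
    exact zero_ne_one this
  have hconj : ∀ μ ∈ A.charpoly.roots, μ⁻¹ = (starRingEnd ℂ) μ := by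
    intro μ hμ
    have habs : ‖μ‖ = 1 := by
      have h1 : ‖μ‖ ^ m = 1 := by
        rw [← norm_pow, hroots1 μ hμ]; exact norm_one
      rcases (pow_eq_one_iff_cases).mp h1 with h | h | h
      · exact absurd h hm
      · exact h
      · exfalso; nlinarith [norm_nonneg μ, h.1]
    have hns : (starRingEnd ℂ) μ * μ = 1 := by
      rw [mul_comm, Complex.mul_conj, ← Complex.sq_norm, habs]; norm_num
    exact inv_eq_of_mul_eq_one_left hns
  have htr : A⁻¹.trace = ((A.charpoly.roots.map fun a => a⁻¹)).sum := by
    rw [Matrix.trace_eq_sum_roots_charpoly, charpoly_inv_eq hdet hroots0]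
    congr 1
    have : (A.charpoly.roots.map fun a => X - C a⁻¹)
        = ((A.charpoly.roots.map fun a => a⁻¹).map fun a => X - C a) := by
      rw [Multiset.map_map]; rfl
    rw [this, Polynomial.roots_multiset_prod_X_sub_C]
  rw [htr, Multiset.map_congr rfl hconj, Matrix.trace_eq_sum_roots_charpoly,
    ← map_multiset_sum]

end auxMatrix

private lemma fdRep_char_inv {K : Type} [Group K] [Finite K] (V : FDRep ℂ K) (x : K) :
    V.character x⁻¹ = (starRingEnd ℂ) (V.character x) := by
  classical
  let b : Module.Basis (Fin (Module.finrank ℂ V)) ℂ V := Module.finBasis ℂ V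
  have htr : ∀ y : K, V.character y = Matrix.trace (LinearMap.toMatrix b b (V.ρ y)) := by
    intro y
    rw [FDRep.character, LinearMap.trace_eq_matrix_trace ℂ b]
  have hinv : LinearMap.toMatrix b b (V.ρ x⁻¹) = (LinearMap.toMatrix b b (V.ρ x))⁻¹ := by
    refine (Matrix.inv_eq_left_inv ?_).symm
    have h1 : V.ρ x⁻¹ * V.ρ x = 1 := by
      rw [← _root_.map_mul V.ρ, inv_mul_cancel]; exact _root_.map_one V.ρ
    rw [← LinearMap.toMatrix_mul, h1, LinearMap.toMatrix_one]
  have hpow : (LinearMap.toMatrix b b (V.ρ x)) ^ (orderOf x) = 1 := by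
    have h1 : V.ρ x ^ orderOf x = 1 := by
      rw [← _root_.map_pow V.ρ, pow_orderOf_eq_one]; exact _root_.map_one V.ρ
    rw [LinearMap.toMatrix_pow, h1, LinearMap.toMatrix_one]
  rw [htr, htr, hinv, trace_inv_eq_conj (orderOf_pos x).ne' hpow]

section grp
variable {G : Type*} [Group G] {H : Subgroup G} {g : G}

private lemma mem_stabCoset_iff {x : G} : x ∈ stabCoset H g ↔ x ∈ H ∧ g⁻¹ * x * g ∈ H := by
  rw [stabCoset, Subgroup.mem_inf]
  refine and_congr_right fun _ => ?_
  rw [show (MulAut.conj g).toMonoidHom = (MulAut.conj g : G ≃* G).toMonoidHom from rfl,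
    Subgroup.mem_map_equiv]
  simp [MulAut.conj]

variable (hg2 : g ^ 2 ∈ H)
include hg2

private lemma conjg_mem {x : G} (hx : x ∈ stabCoset H g) : g⁻¹ * x * g ∈ stabCoset H g := by
  rw [mem_stabCoset_iff] at hx ⊢
  refine ⟨hx.2, ?_⟩
  have h : g⁻¹ * (g⁻¹ * x * g) * g = (g ^ 2)⁻¹ * x * g ^ 2 := by simp only [pow_two]; group
  rw [h]
  exact mul_mem (mul_mem (inv_mem hg2) hx.1) hg2

private lemma conjg_mem' {x : G} (hx : x ∈ stabCoset H g) : g * x * g⁻¹ ∈ stabCoset H g := by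
  rw [mem_stabCoset_iff] at hx ⊢
  constructor
  · have h : g * x * g⁻¹ = g ^ 2 * (g⁻¹ * x * g) * (g ^ 2)⁻¹ := by simp only [pow_two]; group
    rw [h]
    exact mul_mem (mul_mem hg2 hx.2) (inv_mem hg2)
  · have h : g⁻¹ * (g * x * g⁻¹) * g = x := by group
    rw [h]; exact hx.1

private lemma sq_mem_stab {x : G} (hx : x ∈ stabCoset H g) : (g * x) ^ 2 ∈ stabCoset H g := by
  have h1 := conjg_mem' hg2 hx
  rw [mem_stabCoset_iff] at hx h1 ⊢
  constructor
  · have h : (g * x) ^ 2 = (g * x * g⁻¹) * g ^ 2 * x := by simp only [pow_two]; group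
    rw [h]
    exact mul_mem (mul_mem h1.1 hg2) hx.1
  · have h : g⁻¹ * (g * x) ^ 2 * g = x * (g * x * g⁻¹) * g ^ 2 := by simp only [pow_two]; group
    rw [h]
    exact mul_mem (mul_mem hx.1 h1.1) hg2

private lemma mem_stab_of_sq {x : G} (hx : x ∈ H) (h2 : (g * x) ^ 2 ∈ H) :
    x ∈ stabCoset H g := by
  rw [mem_stabCoset_iff]
  refine ⟨hx, ?_⟩
  have h : g⁻¹ * x * g = (g ^ 2)⁻¹ * ((g * x) ^ 2 * x⁻¹) := by simp only [pow_two]; group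
  rw [h]
  exact mul_mem (inv_mem hg2) (mul_mem h2 (inv_mem hx))

private lemma inv_gxg_mem {x : G} (hx : x ∈ stabCoset H g) : (g * x * g)⁻¹ ∈ stabCoset H g := by
  have h1 := conjg_mem hg2 hx
  rw [mem_stabCoset_iff] at hx h1 ⊢
  constructor
  · have h : (g * x * g)⁻¹ = (g⁻¹ * x * g)⁻¹ * (g ^ 2)⁻¹ := by simp only [pow_two]; group
    rw [h]; exact mul_mem (inv_mem h1.1) (inv_mem hg2)
  · have h : g⁻¹ * (g * x * g)⁻¹ * g = (g ^ 2)⁻¹ * x⁻¹ := by simp only [pow_two]; group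
    rw [h]; exact mul_mem (inv_mem hg2) (inv_mem hx.1)

end grp

private lemma sum_dite_subtype {α : Type*} [Fintype α] (p : α → Prop) (F : ∀ a, p a → ℂ) :
    (∑ a : α, if h : p a then F a h else 0) = ∑ a : {x // p x}, F a.1 a.2 := by
  classical
  rw [← Finset.sum_filter_add_sum_filter_not Finset.univ p]
  have h2 : (∑ a ∈ Finset.univ.filter fun a => ¬ p a,
      if h : p a then F a h else 0) = 0 := by
    apply Finset.sum_eq_zero
    intro a ha
    rw [Finset.mem_filter] at ha
    exact dif_neg ha.2
  rw [h2, add_zero]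
  rw [Finset.sum_subtype (Finset.univ.filter p)
    (fun x => by simp : ∀ x, x ∈ Finset.univ.filter p ↔ p x)
    fun a => if h : p a then F a h else 0]
  apply Finset.sum_congr rfl
  intro a _
  exact dif_pos a.2
theorem stmt_4 {G : Type} [Group G] [Finite G] (H : Subgroup G) (g : G)
    (hg : g ∉ H) (hg2 : g ^ 2 ∈ H)
    (Shat : Subgroup G)
    (hShat : (Shat : Set G) =
      (stabCoset H g : Set G) ∪ (fun x => g * x) '' (stabCoset H g : Set G))
    (hle : stabCoset H g ≤ Shat) (hidx : (stabCoset H g).relIndex Shat = 2)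
    (V : FDRep ℂ ↥(stabCoset H g)) (hV : Simple V) :
    (∀ x ∈ stabCoset H g, (g * x) ^ 2 ∈ stabCoset H g) ∧
    (∀ x ∈ Shat, x ^ 2 ∈ stabCoset H g) ∧
    (nuInd H g 2 V.character =
      (Nat.card ↥(stabCoset H g) : ℂ)⁻¹ * ∑ᶠ x : ↥(stabCoset H g),
        (if h : (g * (x : G)) ^ 2 ∈ stabCoset H g
          then V.character ⟨(g * (x : G)) ^ 2, h⟩ else 0)) ∧
    (nuInd H g 2 V.character =
      (Nat.card ↥(stabCoset H g) : ℂ)⁻¹ * ∑ᶠ x : ↥(stabCoset H g),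
        (if h : (x : G) * (g * (x : G) * g⁻¹) * g ^ 2 ∈ stabCoset H g
          then V.character ⟨(x : G) * (g * (x : G) * g⁻¹) * g ^ 2, h⟩ else 0)) ∧
    (nuInd H g 2 V.character =
      (Nat.card ↥(stabCoset H g) : ℂ)⁻¹ * (∑ᶠ x : ↥Shat,
        (if h : (x : G) ^ 2 ∈ stabCoset H g
          then V.character ⟨(x : G) ^ 2, h⟩ else 0)) - fsInd V.character) := by
  classical
  haveI : Fintype G := Fintype.ofFinite G
  have hP1 : ∀ x ∈ stabCoset H g, (g * x) ^ 2 ∈ stabCoset H g :=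
    fun x hx => sq_mem_stab hg2 hx
  have hP2 : ∀ x ∈ Shat, x ^ 2 ∈ stabCoset H g := by
    intro x hx
    have hx' : x ∈ (Shat : Set G) := hx
    rw [hShat] at hx'
    rcases hx' with hx' | ⟨s, hs, rfl⟩
    · exact pow_mem hx' 2
    · exact hP1 s hs
  set c : ℂ := (Nat.card ↥(stabCoset H g) : ℂ)⁻¹ with hc
  have hsq : ∀ x : ↥(stabCoset H g), (g * (x : G)) ^ 2 ∈ stabCoset H g :=
    fun x => hP1 _ x.2
  -- the core identity
  have hnu : nuInd H g 2 V.character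
      = c * ∑ x : ↥(stabCoset H g), V.character ⟨(g * (x : G)) ^ 2, hsq x⟩ := by
    rw [nuInd, finsum_eq_sum_of_fintype]
    congr 1
    have step1 : ∀ x : G,
        (if h : x ∈ H ∧ (g * x) ^ 2 ∈ stabCoset H g
          then (starRingEnd ℂ) (V.character ⟨(g * x) ^ 2, h.2⟩) else 0)
        = (if h : x ∈ stabCoset H g
          then (starRingEnd ℂ) (V.character ⟨(g * x) ^ 2, hP1 x h⟩) else 0) := by
      intro x
      by_cases hx : x ∈ stabCoset H g
      · rw [dif_pos hx, dif_pos ⟨(mem_stabCoset_iff.mp hx).1, hP1 x hx⟩]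
      · rw [dif_neg hx, dif_neg]
        rintro ⟨h1, h2⟩
        exact hx (mem_stab_of_sq hg2 h1 (mem_stabCoset_iff.mp h2).1)
    simp only [step1]
    rw [sum_dite_subtype (fun x => x ∈ stabCoset H g)
      (fun x h => (starRingEnd ℂ) (V.character ⟨(g * x) ^ 2, hP1 x h⟩))]
    have step2 : ∀ a : ↥(stabCoset H g),
        (starRingEnd ℂ) (V.character ⟨(g * (a : G)) ^ 2, hP1 _ a.2⟩)
        = V.character ⟨((g * (a : G)) ^ 2)⁻¹, inv_mem (hP1 _ a.2)⟩ := by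
      intro a
      rw [← fdRep_char_inv]
      rfl
    simp only [step2]
    -- reindex by the involution x ↦ (g x g)⁻¹
    have hσinv : Function.Involutive
        (fun x : ↥(stabCoset H g) =>
          (⟨(g * (x : G) * g)⁻¹, inv_gxg_mem hg2 x.2⟩ : ↥(stabCoset H g))) := by
      intro x
      apply Subtype.ext
      show (g * (g * (x : G) * g)⁻¹ * g)⁻¹ = (x : G)
      group
    refine Fintype.sum_equiv hσinv.toPerm _ _ ?_
    intro x
    congr 1
    apply Subtype.ext
    show ((g * (x : G)) ^ 2)⁻¹ = (g * (g * (x : G) * g)⁻¹) ^ 2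
    simp only [pow_two]
    group
  refine ⟨hP1, hP2, ?_, ?_, ?_⟩
  · -- third bullet
    rw [hnu, finsum_eq_sum_of_fintype]
    congr 1
    apply Finset.sum_congr rfl
    intro x _
    rw [dif_pos (hsq x)]
  · -- fourth bullet
    rw [hnu, finsum_eq_sum_of_fintype]
    congr 1
    have hcond : ∀ x : ↥(stabCoset H g),
        (x : G) * (g * (x : G) * g⁻¹) * g ^ 2 ∈ stabCoset H g := by
      intro x
      have h1 := conjg_mem hg2 (hsq x)
      have h : g⁻¹ * ((g * (x : G)) ^ 2) * g
          = (x : G) * (g * (x : G) * g⁻¹) * g ^ 2 := by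
        simp only [pow_two]; group
      rwa [h] at h1
    have e1 : ∀ x : ↥(stabCoset H g),
        (if h : (x : G) * (g * (x : G) * g⁻¹) * g ^ 2 ∈ stabCoset H g
          then V.character ⟨(x : G) * (g * (x : G) * g⁻¹) * g ^ 2, h⟩ else 0)
        = V.character ⟨(x : G) * (g * (x : G) * g⁻¹) * g ^ 2, hcond x⟩ := by
      intro x
      rw [dif_pos (hcond x)]
    simp only [e1]
    -- reindex via x ↦ g x g⁻¹
    refine Fintype.sum_equiv
      (⟨fun x => ⟨g * (x : G) * g⁻¹, conjg_mem' hg2 x.2⟩,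
        fun x => ⟨g⁻¹ * (x : G) * g, conjg_mem hg2 x.2⟩,
        fun x => by apply Subtype.ext; show g⁻¹ * (g * (x : G) * g⁻¹) * g = (x : G); group,
        fun x => by apply Subtype.ext; show g * (g⁻¹ * (x : G) * g) * g⁻¹ = (x : G); group⟩ :
        ↥(stabCoset H g) ≃ ↥(stabCoset H g)) _ _ ?_
    intro x
    congr 1
    apply Subtype.ext
    show (g * (x : G)) ^ 2
      = (g * (x : G) * g⁻¹) * (g * (g * (x : G) * g⁻¹) * g⁻¹) * g ^ 2
    simp only [pow_two]
    group
  · -- fifth bullet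
    have hmemr : ∀ s : ↥(stabCoset H g), g * (s : G) ∈ Shat := by
      intro s
      have : g * (s : G) ∈ (Shat : Set G) := by
        rw [hShat]; exact Or.inr ⟨s, s.2, rfl⟩
      exact this
    have hmemH : ∀ s : ↥(stabCoset H g), (s : G) ∈ H :=
      fun s => (mem_stabCoset_iff.mp s.2).1
    have hbij : Function.Bijective
        (fun i : ↥(stabCoset H g) ⊕ ↥(stabCoset H g) =>
          Sum.elim (fun s : ↥(stabCoset H g) => (⟨(s : G), hle s.2⟩ : ↥Shat))
            (fun s : ↥(stabCoset H g) => (⟨g * (s : G), hmemr s⟩ : ↥Shat)) i) := by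
      constructor
      · rintro (s | s) (t | t) h <;> simp only [Sum.elim_inl, Sum.elim_inr] at h
        · exact congrArg Sum.inl (Subtype.ext (congrArg (Subtype.val : ↥Shat → G) h))
        · exfalso
          have hval : (s : G) = g * (t : G) := congrArg (Subtype.val : ↥Shat → G) h
          have : g = (s : G) * (t : G)⁻¹ := by rw [hval]; group
          exact hg (this ▸ mul_mem (hmemH s) (inv_mem (hmemH t)))
        · exfalso
          have hval : g * (s : G) = (t : G) := congrArg (Subtype.val : ↥Shat → G) h
          have : g = (t : G) * (s : G)⁻¹ := by rw [← hval]; group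
          exact hg (this ▸ mul_mem (hmemH t) (inv_mem (hmemH s)))
        · have hval : g * (s : G) = g * (t : G) := congrArg (Subtype.val : ↥Shat → G) h
          exact congrArg Sum.inr (Subtype.ext (mul_left_cancel hval))
      · rintro ⟨y, hy⟩
        have hy' : y ∈ (Shat : Set G) := hy
        rw [hShat] at hy'
        rcases hy' with hy' | ⟨s, hs, rfl⟩
        · exact ⟨Sum.inl ⟨y, hy'⟩, rfl⟩
        · exact ⟨Sum.inr ⟨s, hs⟩, rfl⟩
    set φ := Equiv.ofBijective _ hbij with hφ
    have hsplit : (∑ x : ↥Shat, if h : (x : G) ^ 2 ∈ stabCoset H g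
          then V.character ⟨(x : G) ^ 2, h⟩ else 0)
        = (∑ s : ↥(stabCoset H g), V.character (s ^ 2))
          + ∑ s : ↥(stabCoset H g), V.character ⟨(g * (s : G)) ^ 2, hsq s⟩ := by
      rw [← Equiv.sum_comp φ]
      rw [Fintype.sum_sum_type]
      congr 1
      · apply Finset.sum_congr rfl
        intro s _
        show (if h : (s : G) ^ 2 ∈ stabCoset H g
          then V.character ⟨(s : G) ^ 2, h⟩ else 0) = V.character (s ^ 2)
        rw [dif_pos (pow_mem s.2 2)]
        rfl
      · apply Finset.sum_congr rfl
        intro s _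
        show (if h : (g * (s : G)) ^ 2 ∈ stabCoset H g
          then V.character ⟨(g * (s : G)) ^ 2, h⟩ else 0)
          = V.character ⟨(g * (s : G)) ^ 2, hsq s⟩
        rw [dif_pos (hsq s)]
    have hfs : fsInd V.character = c * ∑ s : ↥(stabCoset H g), V.character (s ^ 2) := by
      rw [fsInd, finsum_eq_sum_of_fintype]
    rw [hnu, finsum_eq_sum_of_fintype, hsplit, hfs]
    ring
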